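/- arXiv:2208.13273 — 2 statements merged into one kernel-verified Lean document; each statement's English description precedes it below -/
import Mathlib

section
/- If the symmetric matrix A = K - cI (K the 1D discrete Laplacian, c > 0 with 4sin²(π/(2n)) < c < 4sin²(π(n-1)/(2n))), then the undamped Jacobi amplification matrix G = I - D⁻¹A, where D = (2-c)I, has an eigenvalue of modulus greater than 1, so the Jacobi iteration diverges for generic initial errors. -/
lemma auxSumEq {m : ℕ} (k : ℕ) (f : Fin m → ℝ) :
    ∑ j : Fin m, (if k = (j : ℕ) then f j else 0) = if h : k < m then f ⟨k, h⟩ else 0 := by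
  split_ifs with h
  · rw [Finset.sum_eq_single (⟨k, h⟩ : Fin m)]
    · simp
    · intro j _ hj
      apply if_neg
      intro he
      exact hj (Fin.ext he.symm)
    · simp
  · exact Finset.sum_eq_zero fun j _ => if_neg (by have := j.isLt; omega)

lemma auxSumEq' {m : ℕ} (k : ℕ) (f : Fin m → ℝ) :
    ∑ j : Fin m, (if (j : ℕ) + 1 = k then f j else 0) =
      if h : k - 1 < m ∧ 1 ≤ k then f ⟨k - 1, h.1⟩ else 0 := by
  split_ifs with h
  · rw [Finset.sum_eq_single (⟨k - 1, h.1⟩ : Fin m)]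
    · rw [if_pos (by simp; omega)]
    · intro j _ hj
      apply if_neg
      intro he
      exact hj (Fin.ext (by simp; omega))
    · simp
  · exact Finset.sum_eq_zero fun j _ => if_neg (by have := j.isLt; omega)

theorem stmt14 {n : ℕ} (hn : 2 ≤ n) (c : ℝ) (hc0 : 0 < c) (hc2 : c < 2)
    (hc : 4 * Real.sin (Real.pi / (2 * n)) ^ 2 < c)
    (K A D G : Matrix (Fin (n - 1)) (Fin (n - 1)) ℝ)
    (hK : ∀ i j, K i j = if i = j then 2
      else if (i : ℕ) + 1 = (j : ℕ) ∨ (j : ℕ) + 1 = (i : ℕ) then -1 else 0)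
    (hA : A = K - c • 1) (hD : D = (2 - c) • 1) (hG : G = 1 - D⁻¹ * A) :
    ∃ (μ : ℝ) (v : Fin (n - 1) → ℝ), v ≠ 0 ∧ G.mulVec v = μ • v ∧ 1 < |μ| ∧
      Filter.Tendsto (fun m => ‖(G ^ m).mulVec v‖) Filter.atTop Filter.atTop := by
  have hN0 : (0:ℝ) < n := by
    have : (2:ℝ) ≤ n := by exact_mod_cast hn
    linarith
  set t : ℝ := Real.pi / n with ht
  have ht0 : 0 < t := div_pos Real.pi_pos hN0
  have htpi : t < Real.pi := by
    rw [ht]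
    have h1 : (1:ℝ) < n := by
      have : (2:ℝ) ≤ n := by exact_mod_cast hn
      linarith
    exact div_lt_self Real.pi_pos h1
  set w : ℕ → ℝ := fun k => Real.sin (k * t) with hwdef
  have hw0 : w 0 = 0 := by simp [hwdef]
  have hwn : w n = 0 := by
    have he : (n:ℝ) * t = Real.pi := by
      rw [ht]; field_simp
    simp [hwdef, he]
  set lam : ℝ := 2 - 2 * Real.cos t with hlamdef
  have hlam : lam < c := by
    have h2 : 2 * (Real.pi / (2 * n)) = t := by
      rw [ht]; field_simp
    have hs := Real.sin_sq (Real.pi / (2 * n))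
    have hcos := Real.cos_two_mul (Real.pi / (2 * n))
    rw [h2] at hcos
    rw [hlamdef]
    nlinarith [hc, hs, hcos]
  have hc2' : (0:ℝ) < 2 - c := by linarith
  set mu : ℝ := 1 - (lam - c) / (2 - c) with hmudef
  have hmu : 1 < mu := by
    have hneg : (lam - c) / (2 - c) < 0 := div_neg_of_neg_of_pos (by linarith) hc2'
    rw [hmudef]; linarith
  set v : Fin (n - 1) → ℝ := fun i => w ((i : ℕ) + 1) with hvdef
  have hv0 : v ≠ 0 := by
    intro h
    have h1 : v ⟨0, by omega⟩ = 0 := by rw [h]; rfl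
    have hsin : 0 < Real.sin t := Real.sin_pos_of_pos_of_lt_pi ht0 htpi
    have : v ⟨0, by omega⟩ = Real.sin t := by simp [hvdef, hwdef]
    rw [this] at h1
    linarith
  have htrig : ∀ k : ℕ, 2 * w (k + 1) - w k - w (k + 2) = lam * w (k + 1) := by
    intro k
    have e1 : ((k:ℝ)) * t = ((k:ℝ) + 1) * t - t := by ring
    have e2 : ((k:ℝ) + 2) * t = ((k:ℝ) + 1) * t + t := by ring
    simp only [hwdef, hlamdef]
    push_cast
    rw [e1, e2, Real.sin_sub, Real.sin_add]
    ring
  have hKv : K.mulVec v = lam • v := by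
    funext i
    have hi := i.isLt
    simp only [Matrix.mulVec, dotProduct, Pi.smul_apply, smul_eq_mul]
    have hterm : ∀ j : Fin (n - 1), K i j * v j =
        (if j = i then 2 * v j else 0) +
        ((if (i : ℕ) + 1 = (j : ℕ) then -v j else 0) +
         (if (j : ℕ) + 1 = (i : ℕ) then -v j else 0)) := by
      intro j
      rw [hK]
      rcases eq_or_ne i j with rfl | h1
      · have hne : ¬((i : ℕ) + 1 = (i : ℕ)) := by omega
        simp [hne]
      · rw [if_neg h1, if_neg (show ¬(j = i) from fun h => h1 h.symm)]
        by_cases h2 : (i : ℕ) + 1 = (j : ℕ)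
        · rw [if_pos (Or.inl h2), if_pos h2,
            if_neg (show ¬((j : ℕ) + 1 = (i : ℕ)) by omega)]
          ring
        · by_cases h3 : (j : ℕ) + 1 = (i : ℕ)
          · rw [if_pos (Or.inr h3), if_neg h2, if_pos h3]
            ring
          · rw [if_neg (show ¬((i:ℕ)+1 = (j:ℕ) ∨ (j:ℕ)+1 = (i:ℕ)) by tauto),
              if_neg h2, if_neg h3]
            ring
    rw [Finset.sum_congr rfl fun j _ => hterm j]
    rw [Finset.sum_add_distrib, Finset.sum_add_distrib]
    have hs1 : ∑ j : Fin (n - 1), (if j = i then 2 * v j else 0) = 2 * v i := by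
      simp
    have hs2 : ∑ j : Fin (n - 1), (if (i : ℕ) + 1 = (j : ℕ) then -v j else 0)
        = -w ((i : ℕ) + 2) := by
      rw [auxSumEq ((i : ℕ) + 1) (fun j => -v j)]
      by_cases h : (i : ℕ) + 1 < n - 1
      · rw [dif_pos h]
      · rw [dif_neg h]
        have he : (i : ℕ) + 2 = n := by omega
        rw [he, hwn, neg_zero]
    have hs3 : ∑ j : Fin (n - 1), (if (j : ℕ) + 1 = (i : ℕ) then -v j else 0)
        = -w (i : ℕ) := by
      rw [auxSumEq' (i : ℕ) (fun j => -v j)]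
      by_cases h : 1 ≤ (i : ℕ)
      · rw [dif_pos ⟨by omega, h⟩]
        simp only [hvdef]
        congr 2
        omega
      · rw [dif_neg (by omega)]
        have he : (i : ℕ) = 0 := by omega
        rw [he, hw0, neg_zero]
    rw [hs1, hs2, hs3]
    have := htrig (i : ℕ)
    have hvv : v i = w ((i : ℕ) + 1) := rfl
    rw [hvv]
    linarith
  have hAv : A.mulVec v = (lam - c) • v := by
    rw [hA, Matrix.sub_mulVec, hKv, Matrix.smul_mulVec, Matrix.one_mulVec]
    funext i
    simp only [Pi.sub_apply, Pi.smul_apply, smul_eq_mul]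
    ring
  have hDinv : D⁻¹ = (2 - c)⁻¹ • (1 : Matrix (Fin (n - 1)) (Fin (n - 1)) ℝ) := by
    apply Matrix.inv_eq_right_inv
    rw [hD, Matrix.smul_mul, Matrix.mul_smul, one_mul, smul_smul,
      mul_inv_cancel₀ (by linarith), one_smul]
  have hGv : G.mulVec v = mu • v := by
    rw [hG, Matrix.sub_mulVec, Matrix.one_mulVec, hDinv, Matrix.smul_mul, one_mul,
      Matrix.smul_mulVec, hAv, smul_smul]
    have hmu2 : mu = 1 - (2 - c)⁻¹ * (lam - c) := by rw [hmudef]; ring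
    rw [hmu2, sub_smul, one_smul]
  have hpow : ∀ k : ℕ, (G ^ k).mulVec v = mu ^ k • v := by
    intro k
    induction k with
    | zero => simp [Matrix.one_mulVec]
    | succ k ih =>
      rw [pow_succ', ← Matrix.mulVec_mulVec, ih, Matrix.mulVec_smul, hGv, smul_smul,
        ← pow_succ]
  have habs : 1 < |mu| := by rwa [abs_of_pos (by linarith)]
  refine ⟨mu, v, hv0, hGv, habs, ?_⟩
  have hnorm : ∀ k : ℕ, ‖(G ^ k).mulVec v‖ = |mu| ^ k * ‖v‖ := by
    intro k
    rw [hpow, norm_smul, Real.norm_eq_abs, abs_pow]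
  have hvpos : 0 < ‖v‖ := norm_pos_iff.mpr hv0
  have := (tendsto_pow_atTop_atTop_of_one_lt habs).atTop_mul_const hvpos
  exact this.congr fun k => (hnorm k).symm
end

section
/- If A ∈ ℝ^{n×n} is symmetric positive definite, then the Gauss–Seidel iteration converges: the spectral radius of -(L+D)⁻¹U is strictly less than 1. -/
open Matrix

section Aux

lemma exists_eigvec {n : ℕ} (M : Matrix (Fin n) (Fin n) ℂ) (μ : ℂ)
    (h : μ ∈ spectrum ℂ M) : ∃ x : Fin n → ℂ, x ≠ 0 ∧ M.mulVec x = μ • x := by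
  rw [← AlgEquiv.spectrum_eq (Matrix.toLinAlgEquiv' : Matrix (Fin n) (Fin n) ℂ ≃ₐ[ℂ] _),
      ← Module.End.hasEigenvalue_iff_mem_spectrum] at h
  obtain ⟨x, hx⟩ := h.exists_hasEigenvector
  refine ⟨x, hx.2, ?_⟩
  have := hx.apply_eq_smul
  simpa [Matrix.toLinAlgEquiv'_apply, Matrix.toLin'_apply] using this

lemma q_conj {n : ℕ} (B : Matrix (Fin n) (Fin n) ℝ) (x : Fin n → ℂ) :
    star x ⬝ᵥ ((Bᵀ).map (algebraMap ℝ ℂ)).mulVec x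
      = (starRingEnd ℂ) (star x ⬝ᵥ (B.map (algebraMap ℝ ℂ)).mulVec x) := by
  have hct : (B.map (algebraMap ℝ ℂ))ᴴ = (Bᵀ).map (algebraMap ℝ ℂ) := by
    ext i j; simp [conjTranspose_apply]
  calc star x ⬝ᵥ ((Bᵀ).map (algebraMap ℝ ℂ)).mulVec x
      = star x ⬝ᵥ ((B.map (algebraMap ℝ ℂ))ᴴ).mulVec x := by rw [hct]
    _ = (starRingEnd ℂ) (star x ⬝ᵥ (B.map (algebraMap ℝ ℂ)).mulVec x) := by
        rw [dotProduct_mulVec]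
        rw [show ((starRingEnd ℂ) (star x ⬝ᵥ (B.map (algebraMap ℝ ℂ)).mulVec x))
            = star (star x ⬝ᵥ (B.map (algebraMap ℝ ℂ)).mulVec x) from rfl]
        rw [star_dotProduct]
        simp [star_mulVec, dotProduct_comm]

lemma re_q_pos {n : ℕ} {A : Matrix (Fin n) (Fin n) ℝ} (hA : A.PosDef)
    (x : Fin n → ℂ) (hx : x ≠ 0) :
    0 < (star x ⬝ᵥ (A.map (algebraMap ℝ ℂ)).mulVec x).re := by
  set u : Fin n → ℝ := fun i => (x i).re with hu
  set v : Fin n → ℝ := fun i => (x i).im with hv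
  have key : (star x ⬝ᵥ (A.map (algebraMap ℝ ℂ)).mulVec x).re
      = star u ⬝ᵥ A.mulVec u + star v ⬝ᵥ A.mulVec v := by
    simp only [dotProduct, Matrix.mulVec, Pi.star_apply, Matrix.map_apply,
      Complex.re_sum, star_trivial]
    rw [← Finset.sum_add_distrib]
    refine Finset.sum_congr rfl fun i _ => ?_
    simp only [Complex.mul_re, Complex.re_sum, Complex.im_sum, Finset.mul_sum]
    rw [← Finset.sum_add_distrib]
    refine Finset.sum_congr rfl fun j _ => ?_
    simp [Complex.mul_re, Complex.mul_im, hu, hv]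
  rw [key]
  have hnn : ∀ w : Fin n → ℝ, 0 ≤ star w ⬝ᵥ A.mulVec w := by
    intro w
    by_cases hw : w = 0
    · simp [hw]
    · have := hA.re_dotProduct_pos hw
      simpa using this.le
  have hpos : ∀ w : Fin n → ℝ, w ≠ 0 → 0 < star w ⬝ᵥ A.mulVec w := by
    intro w hw
    have := hA.re_dotProduct_pos hw
    simpa using this
  have : u ≠ 0 ∨ v ≠ 0 := by
    by_contra h
    push_neg at h
    apply hx
    funext i
    have h1 : u i = 0 := by rw [h.1]; rfl
    have h2 : v i = 0 := by rw [h.2]; rfl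
    exact Complex.ext h1 h2
  rcases this with h | h
  · exact add_pos_of_pos_of_nonneg (hpos u h) (hnn v)
  · exact add_pos_of_nonneg_of_pos (hnn u) (hpos v h)

end Aux

theorem stmt16 {n : ℕ} (A : Matrix (Fin n) (Fin n) ℝ) (hA : A.PosDef)
    (L D U : Matrix (Fin n) (Fin n) ℝ)
    (hL : L = Matrix.of fun i j => if j < i then A i j else 0)
    (hD : D = Matrix.diagonal fun i => A i i)
    (hU : U = Matrix.of fun i j => if i < j then A i j else 0) :
    ∀ μ ∈ spectrum ℂ ((-((L + D)⁻¹ * U)).map (algebraMap ℝ ℂ)), ‖μ‖ < 1 := by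
  intro μ hμ
  obtain ⟨x, hx, hGx⟩ := exists_eigvec _ μ hμ
  -- diagonal entries positive
  have hdiag : ∀ i, 0 < A i i := by
    intro i
    have := hA.re_dotProduct_pos (x := Pi.single i 1) (by
      simp [funext_iff, not_forall]
      exact ⟨i, by simp⟩)
    simpa [dotProduct, Matrix.mulVec, Pi.single_apply] using this
  -- M := L + D is lower triangular with positive diagonal
  have hMlow : (L + D).BlockTriangular OrderDual.toDual := by
    intro i j hij
    have hij' : i < j := hij
    simp [hL, hD, Matrix.diagonal_apply, hij'.ne', not_lt_of_gt hij', hij'.ne]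
  have hMdiag : ∀ i, (L + D) i i = A i i := by
    intro i; simp [hL, hD, Matrix.diagonal_apply]
  have hdet : IsUnit (L + D).det := by
    rw [Matrix.det_of_lowerTriangular _ hMlow]
    refine isUnit_iff_ne_zero.mpr (Finset.prod_ne_zero_iff.mpr fun i _ => ?_)
    rw [hMdiag i]; exact (hdiag i).ne'
  -- symmetry : U = Lᵀ and A = L + D + U
  have hsym : ∀ i j, A j i = A i j := by
    intro i j
    have := hA.isHermitian
    conv_lhs => rw [← this]
    simp [conjTranspose_apply]
  have hUL : U = Lᵀ := by
    ext i j
    simp only [hU, hL, transpose_apply, Matrix.of_apply]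
    rcases lt_or_ge i j with h | h
    · simp [h, hsym i j]
    · simp [not_lt_of_ge h]
  have hALDU : A = L + D + U := by
    ext i j
    rcases lt_trichotomy i j with h | h | h
    · simp [hL, hD, hU, Matrix.diagonal_apply, h, h.ne, h.ne', not_lt_of_gt h]
    · simp [hL, hD, hU, Matrix.diagonal_apply, h]
    · simp [hL, hD, hU, Matrix.diagonal_apply, h, h.ne, h.ne', not_lt_of_gt h]
  -- eigen relation transformed
  have hmul : ((L + D).map (algebraMap ℝ ℂ)) * ((-((L + D)⁻¹ * U)).map (algebraMap ℝ ℂ)) = -(U.map (algebraMap ℝ ℂ)) := by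
    have : (L + D) * (-((L + D)⁻¹ * U)) = -U := by
      rw [mul_neg, Matrix.mul_nonsing_inv_cancel_left _ _ hdet]
    calc ((L + D).map (algebraMap ℝ ℂ)) * ((-((L + D)⁻¹ * U)).map (algebraMap ℝ ℂ))
        = ((L + D) * (-((L + D)⁻¹ * U))).map (algebraMap ℝ ℂ) := by
          rw [Matrix.map_mul]
      _ = (-U).map (algebraMap ℝ ℂ) := by rw [this]
      _ = -(U.map (algebraMap ℝ ℂ)) := by ext i j; simp
  have hvec : (-(U.map (algebraMap ℝ ℂ))).mulVec x = μ • (((L + D).map (algebraMap ℝ ℂ)).mulVec x) := by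
    rw [← hmul]
    rw [← Matrix.mulVec_mulVec, hGx, Matrix.mulVec_smul]
  -- dot with star x
  set b : ℂ := star x ⬝ᵥ (L.map (algebraMap ℝ ℂ)).mulVec x with hb
  set a : ℂ := star x ⬝ᵥ (D.map (algebraMap ℝ ℂ)).mulVec x with ha
  have hUq : star x ⬝ᵥ (U.map (algebraMap ℝ ℂ)).mulVec x = (starRingEnd ℂ) b := by
    rw [hUL]; exact q_conj L x
  have hmain : -((starRingEnd ℂ) b) = μ * (a + b) := by
    have := congrArg (fun w => star x ⬝ᵥ w) hvec
    simp only [Matrix.neg_mulVec, dotProduct_neg, dotProduct_smul,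
      smul_eq_mul] at this
    rw [hUq] at this
    rw [this]
    congr 1
    have : ((L + D).map (algebraMap ℝ ℂ)) = L.map (algebraMap ℝ ℂ) + D.map (algebraMap ℝ ℂ) := by ext i j; simp
    rw [this, Matrix.add_mulVec, dotProduct_add, hb, ha]
    ring
  -- a is real and positive
  set r : ℝ := ∑ i, A i i * Complex.normSq (x i) with hr
  have hterm : ∀ i : Fin n, ((A i i : ℂ)) * ((starRingEnd ℂ) (x i) * x i)
      = ((A i i * Complex.normSq (x i) : ℝ) : ℂ) := by
    intro i
    rw [mul_comm ((starRingEnd ℂ) (x i)), Complex.mul_conj]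
    push_cast
    ring
  have hav2 : a = (r : ℂ) := by
    have hav : a = ∑ i, (A i i : ℂ) * ((starRingEnd ℂ) (x i) * x i) := by
      rw [ha, hD]
      simp only [dotProduct, Matrix.mulVec, Matrix.map_apply, Matrix.diagonal_apply,
        Pi.star_apply]
      refine Finset.sum_congr rfl fun i _ => ?_
      rw [Finset.sum_eq_single i (by intro j _ hj; simp [Ne.symm hj]) (by simp)]
      simp
      ring
    rw [hav, hr]
    push_cast
    exact Finset.sum_congr rfl fun i _ => by rw [hterm i]; push_cast; ring
  have har : 0 < r := by
    obtain ⟨i, hi⟩ : ∃ i, x i ≠ 0 := by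
      by_contra h
      push_neg at h
      exact hx (funext h)
    refine Finset.sum_pos' (fun j _ => ?_) ⟨i, Finset.mem_univ i, ?_⟩
    · exact mul_nonneg (hdiag j).le (Complex.normSq_nonneg _)
    · exact mul_pos (hdiag i) (Complex.normSq_pos.mpr hi)
  -- positivity of the full quadratic form
  have hpos : 0 < a.re + 2 * b.re := by
    have h1 := re_q_pos hA x hx
    have h2 : star x ⬝ᵥ (A.map (algebraMap ℝ ℂ)).mulVec x = b + a + (starRingEnd ℂ) b := by
      rw [hALDU]
      have : ((L + D + U).map (algebraMap ℝ ℂ)) = L.map (algebraMap ℝ ℂ) + D.map (algebraMap ℝ ℂ) + U.map (algebraMap ℝ ℂ) := by ext i j; simp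
      rw [this, Matrix.add_mulVec, Matrix.add_mulVec, dotProduct_add,
        dotProduct_add, hUq, hb, ha]
    rw [h2] at h1
    simp only [Complex.add_re, Complex.conj_re] at h1
    linarith
  rw [hav2] at hmain
  have hpos' : 0 < r + 2 * b.re := by
    rw [hav2] at hpos
    simpa using hpos
  have hne : (r : ℂ) + b ≠ 0 := by
    intro h0
    rw [h0, mul_zero, neg_eq_zero] at hmain
    have hb0 : b = 0 := by
      have := congrArg (starRingEnd ℂ) hmain
      simpa using this
    rw [hb0, add_zero] at h0
    exact har.ne' (by exact_mod_cast h0)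
  have hnorm : ‖b‖ = ‖μ‖ * ‖(r : ℂ) + b‖ := by
    have := congrArg norm hmain
    simpa [norm_mul] using this
  have hlt : ‖b‖ < ‖(r : ℂ) + b‖ := by
    apply lt_of_pow_lt_pow_left₀ 2 (norm_nonneg _)
    rw [Complex.sq_norm, Complex.sq_norm]
    simp only [Complex.normSq_apply, Complex.add_re, Complex.add_im, Complex.ofReal_re,
      Complex.ofReal_im, zero_add]
    nlinarith [har, hpos']
  have hposn : 0 < ‖(r : ℂ) + b‖ := norm_pos_iff.mpr hne
  have : ‖μ‖ * ‖(r : ℂ) + b‖ < 1 * ‖(r : ℂ) + b‖ := by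
    rw [← hnorm, one_mul]
    exact hlt
  exact lt_of_mul_lt_mul_right this hposn.le
end
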